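/- arXiv:1312.2169 — 3 statements merged into one kernel-verified Lean document; each statement's English description precedes it below -/
import Mathlib

section
/- Suppose (g12 ≥ g10 or α1 = 0) and (g21 ≥ g20 or α2 = 0). Then J1 + J7 ≥ J8 and J2 + J6 ≥ J8. Consequently, the set of rate pairs {(R1, R2) ∈ ℝ² : R1 ≤ J1 + J3, R2 ≤ J2 + J4, R1 + R2 ≤ J1 + J2 + J5, R1 + R2 ≤ J8} is equal to the set {(R1, R2) ∈ ℝ² : R1 ≤ J1 + J3, R2 ≤ J2 + J4, R1 + R2 ≤ J1 + J2 + J5, R1 + R2 ≤ J8, R1 + R2 ≤ J1 + J7, R1 + R2 ≤ J2 + J6}; i.e., the two additional sum-rate constraints R1 + R2 ≤ J1 + J7 and R1 + R2 ≤ J2 + J6 are redundant. -/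
/-- Corollary 1 (redundancy of the two extra sum-rate constraints):
if `g12 ≥ g10` (or `α1 = 0`) and `g21 ≥ g20` (or `α2 = 0`), then
`J1 + J7 ≥ J8` and `J2 + J6 ≥ J8`, and the achievable rate region of
Theorem 1 is unchanged by adding the constraints `R1 + R2 ≤ J1 + J7`
and `R1 + R2 ≤ J2 + J6`. -/
theorem redundant_sum_rate_constraints
    (α1 α2 α3 g10 g20 g12 g21 ρ11 ρ22 ρ10 ρ20 ρ13 ρ23 : ℝ)
    (hα1 : 0 ≤ α1) (hα2 : 0 ≤ α2) (hα3 : 0 ≤ α3)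
    (hg10 : 0 ≤ g10) (hg20 : 0 ≤ g20) (hg12 : 0 ≤ g12) (hg21 : 0 ≤ g21)
    (hρ11 : 0 ≤ ρ11) (hρ22 : 0 ≤ ρ22) (hρ10 : 0 ≤ ρ10) (hρ20 : 0 ≤ ρ20)
    (hρ13 : 0 ≤ ρ13) (hρ23 : 0 ≤ ρ23)
    (h1 : g12 ≥ g10 ∨ α1 = 0) (h2 : g21 ≥ g20 ∨ α2 = 0) :
    let J1 := α1 * Real.logb 2 (1 + g12 ^ 2 * ρ11)
    let J2 := α2 * Real.logb 2 (1 + g21 ^ 2 * ρ22)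
    let J3 := α3 * Real.logb 2 (1 + g10 ^ 2 * ρ10)
    let J4 := α3 * Real.logb 2 (1 + g20 ^ 2 * ρ20)
    let J5 := α3 * Real.logb 2 (1 + g10 ^ 2 * ρ10 + g20 ^ 2 * ρ20)
    let ζ := Real.logb 2 (1 + g10 ^ 2 * ρ10 + g20 ^ 2 * ρ20 +
      (g10 * Real.sqrt ρ13 + g20 * Real.sqrt ρ23) ^ 2)
    let J6 := α1 * Real.logb 2 (1 + g10 ^ 2 * ρ11) + α3 * ζ
    let J7 := α2 * Real.logb 2 (1 + g20 ^ 2 * ρ22) + α3 * ζ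
    let J8 := α1 * Real.logb 2 (1 + g10 ^ 2 * ρ11) +
      α2 * Real.logb 2 (1 + g20 ^ 2 * ρ22) + α3 * ζ
    J1 + J7 ≥ J8 ∧ J2 + J6 ≥ J8 ∧
    ({p : ℝ × ℝ | p.1 ≤ J1 + J3 ∧ p.2 ≤ J2 + J4 ∧
        p.1 + p.2 ≤ J1 + J2 + J5 ∧ p.1 + p.2 ≤ J8} =
      {p : ℝ × ℝ | p.1 ≤ J1 + J3 ∧ p.2 ≤ J2 + J4 ∧
        p.1 + p.2 ≤ J1 + J2 + J5 ∧ p.1 + p.2 ≤ J8 ∧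
        p.1 + p.2 ≤ J1 + J7 ∧ p.1 + p.2 ≤ J2 + J6}) := by
  intro J1 J2 J3 J4 J5 ζ J6 J7 J8
  have key1 : J1 ≥ α1 * Real.logb 2 (1 + g10 ^ 2 * ρ11) := by
    rcases h1 with h | h
    · apply mul_le_mul_of_nonneg_left _ hα1
      have hg : g10 ^ 2 ≤ g12 ^ 2 := by nlinarith
      gcongr <;> nlinarith
    · simp [J1, h]
  have key2 : J2 ≥ α2 * Real.logb 2 (1 + g20 ^ 2 * ρ22) := by
    rcases h2 with h | h
    · apply mul_le_mul_of_nonneg_left _ hα2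
      have hg : g20 ^ 2 ≤ g21 ^ 2 := by nlinarith
      gcongr <;> nlinarith
    · simp [J2, h]
  have hA : J1 + J7 ≥ J8 := by simp only [J7, J8]; linarith
  have hB : J2 + J6 ≥ J8 := by simp only [J6, J8]; linarith
  refine ⟨hA, hB, ?_⟩
  ext p
  simp only [Set.mem_setOf_eq]
  constructor
  · rintro ⟨a, b, c, d⟩
    exact ⟨a, b, c, d, le_trans d hA, le_trans d hB⟩
  · rintro ⟨a, b, c, d, _, _⟩
    exact ⟨a, b, c, d⟩
end

section
/- Suppose g12 ≤ g10 and g21 ≤ g20. Then J1 + J7 ≥ J1 + J2 + J5 and J2 + J6 ≥ J1 + J2 + J5; hence in this case the sum-rate constraints R1 + R2 ≤ J1 + J7 and R1 + R2 ≤ J2 + J6 are implied by the constraint R1 + R2 ≤ J1 + J2 + J5. -/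
/-- If the inter-UE links are weaker than the direct links
(g12 <= g10 and g21 <= g20), then J1 + J7 >= J1 + J2 + J5 and
J2 + J6 >= J1 + J2 + J5; hence the sum-rate constraints
R1 + R2 <= J1 + J7 and R1 + R2 <= J2 + J6 are implied by
R1 + R2 <= J1 + J2 + J5. -/
theorem sum_rate_constraints_case1
    (α1 α2 α3 g10 g20 g12 g21 ρ11 ρ22 ρ10 ρ20 ρ13 ρ23 : ℝ)
    (hα1 : 0 ≤ α1) (hα2 : 0 ≤ α2) (hα3 : 0 ≤ α3)
    (hg10 : 0 ≤ g10) (hg20 : 0 ≤ g20) (hg12 : 0 ≤ g12) (hg21 : 0 ≤ g21)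
    (hρ11 : 0 ≤ ρ11) (hρ22 : 0 ≤ ρ22) (hρ10 : 0 ≤ ρ10) (hρ20 : 0 ≤ ρ20)
    (hρ13 : 0 ≤ ρ13) (hρ23 : 0 ≤ ρ23)
    (h1 : g12 ≤ g10) (h2 : g21 ≤ g20) :
    let J1 := α1 * Real.logb 2 (1 + g12 ^ 2 * ρ11)
    let J2 := α2 * Real.logb 2 (1 + g21 ^ 2 * ρ22)
    let J3 := α3 * Real.logb 2 (1 + g10 ^ 2 * ρ10)
    let J4 := α3 * Real.logb 2 (1 + g20 ^ 2 * ρ20)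
    let J5 := α3 * Real.logb 2 (1 + g10 ^ 2 * ρ10 + g20 ^ 2 * ρ20)
    let ζ := Real.logb 2 (1 + g10 ^ 2 * ρ10 + g20 ^ 2 * ρ20 +
      (g10 * Real.sqrt ρ13 + g20 * Real.sqrt ρ23) ^ 2)
    let J6 := α1 * Real.logb 2 (1 + g10 ^ 2 * ρ11) + α3 * ζ
    let J7 := α2 * Real.logb 2 (1 + g20 ^ 2 * ρ22) + α3 * ζ
    let J8 := α1 * Real.logb 2 (1 + g10 ^ 2 * ρ11) +
      α2 * Real.logb 2 (1 + g20 ^ 2 * ρ22) + α3 * ζ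
    (J1 + J7 ≥ J1 + J2 + J5 ∧ J2 + J6 ≥ J1 + J2 + J5) ∧
    ∀ R1 R2 : ℝ, R1 + R2 ≤ J1 + J2 + J5 →
      R1 + R2 ≤ J1 + J7 ∧ R1 + R2 ≤ J2 + J6 := by
  intro J1 J2 J3 J4 J5 ζ J6 J7 J8
  have hb : (1:ℝ) < 2 := one_lt_two
  have key : ∀ a b : ℝ, 0 ≤ a → a ≤ b → Real.logb 2 (1 + a) ≤ Real.logb 2 (1 + b) := by
    intro a b ha hab
    exact Real.logb_le_logb_of_le hb (by linarith) (by linarith)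
  -- log monotonicity facts
  have hA : Real.logb 2 (1 + g21 ^ 2 * ρ22) ≤ Real.logb 2 (1 + g20 ^ 2 * ρ22) := by
    apply key
    · positivity
    · have : g21 ^ 2 ≤ g20 ^ 2 := by nlinarith
      nlinarith
  have hB : Real.logb 2 (1 + g12 ^ 2 * ρ11) ≤ Real.logb 2 (1 + g10 ^ 2 * ρ11) := by
    apply key
    · positivity
    · have : g12 ^ 2 ≤ g10 ^ 2 := by nlinarith
      nlinarith
  have hC : Real.logb 2 (1 + g10 ^ 2 * ρ10 + g20 ^ 2 * ρ20) ≤ ζ := by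
    have h := key (g10 ^ 2 * ρ10 + g20 ^ 2 * ρ20)
      (g10 ^ 2 * ρ10 + g20 ^ 2 * ρ20 + (g10 * Real.sqrt ρ13 + g20 * Real.sqrt ρ23) ^ 2)
      (by positivity) (by nlinarith [sq_nonneg (g10 * Real.sqrt ρ13 + g20 * Real.sqrt ρ23)])
    simpa [ζ, add_assoc] using h
  have k1 : J1 + J7 ≥ J1 + J2 + J5 := by
    have := mul_le_mul_of_nonneg_left hA hα2
    have := mul_le_mul_of_nonneg_left hC hα3
    simp only [J1, J2, J5, J7]; linarith
  have k2 : J2 + J6 ≥ J1 + J2 + J5 := by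
    have := mul_le_mul_of_nonneg_left hB hα1
    have := mul_le_mul_of_nonneg_left hC hα3
    simp only [J1, J2, J5, J6]; linarith
  exact ⟨⟨k1, k2⟩, fun R1 R2 h => ⟨le_trans h k1, le_trans h k2⟩⟩
end

section
/- Gallager error exponent at ρ = 0: Let 𝒳 and 𝒴 be nonempty finite types, let p : 𝒳 → ℝ satisfy p(x) > 0 for all x and ∑_x p(x) = 1, and let W : 𝒳 → 𝒴 → ℝ satisfy W(x)(y) > 0 for all x, y and ∑_y W(x)(y) = 1 for each x. Define E0 : ℝ → ℝ by E0(ρ) = −log₂(∑_y (∑_x p(x)·W(x)(y)^{1/(1+ρ)})^{1+ρ}) and define the mutual information I = ∑_x ∑_y p(x)·W(x)(y)·log₂(W(x)(y) / ∑_{x'} p(x')·W(x')(y)). Then E0(0) = 0 and E0 has derivative I at ρ = 0 (in the sense of HasDerivAt). -/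
open scoped BigOperators

/-- Gallager error exponent at ρ = 0: for a discrete memoryless channel W with
input distribution p (all strictly positive), the Gallager function
E0(ρ) = −log₂ ∑_y (∑_x p(x)·W(x,y)^{1/(1+ρ)})^{1+ρ} satisfies E0(0) = 0 and
E0'(0) = I, the mutual information in bits. -/
theorem gallager_exponent_at_zero
    {𝒳 𝒴 : Type*} [Fintype 𝒳] [Fintype 𝒴] [Nonempty 𝒳] [Nonempty 𝒴]
    (p : 𝒳 → ℝ) (W : 𝒳 → 𝒴 → ℝ)
    (hp : ∀ x, 0 < p x) (hps : ∑ x, p x = 1)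
    (hW : ∀ x y, 0 < W x y) (hWs : ∀ x, ∑ y, W x y = 1) :
    let E0 : ℝ → ℝ := fun ρ =>
      - Real.logb 2 (∑ y, (∑ x, p x * (W x y) ^ (1 / (1 + ρ))) ^ (1 + ρ))
    let I : ℝ := ∑ x, ∑ y, p x * W x y *
      Real.logb 2 (W x y / ∑ x', p x' * W x' y)
    E0 0 = 0 ∧ HasDerivAt E0 I 0 := by
  intro E0 I
  set q : 𝒴 → ℝ := fun y => ∑ x, p x * W x y with hq
  have hq_pos : ∀ y, 0 < q y := fun y =>
    Finset.sum_pos (fun x _ => mul_pos (hp x) (hW x y)) Finset.univ_nonempty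
  set A : 𝒴 → ℝ → ℝ := fun y ρ => ∑ x, p x * (W x y) ^ (1 / (1 + ρ)) with hAdef
  have hA0 : ∀ y, A y 0 = q y := by
    intro y; simp [hAdef, hq, Real.rpow_one]
  -- derivative of s(ρ) = 1/(1+ρ) at 0 is -1
  have hs : HasDerivAt (fun ρ : ℝ => 1 / (1 + ρ)) (-1) 0 := by
    have h1 : HasDerivAt (fun ρ : ℝ => 1 + ρ) 1 0 := (hasDerivAt_id 0).const_add 1
    have h2 := h1.inv (by norm_num)
    simp only [one_div]
    exact h2.congr_deriv (by norm_num)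
  -- derivative of A y at 0
  have hAd : ∀ y, HasDerivAt (A y)
      (-∑ x, p x * W x y * Real.log (W x y)) 0 := by
    intro y
    have : HasDerivAt (A y)
        (∑ x, p x * (0 * (1 / (1 + (0:ℝ))) * W x y ^ (1 / (1 + (0:ℝ)) - 1)
          + (-1) * W x y ^ (1 / (1 + (0:ℝ))) * Real.log (W x y))) 0 := by
      apply HasDerivAt.fun_sum
      intro x _
      exact ((hasDerivAt_const (0:ℝ) (W x y)).rpow hs (hW x y)).const_mul (p x)
    convert this using 1
    rw [← Finset.sum_neg_distrib]
    apply Finset.sum_congr rfl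
    intro x _
    norm_num [Real.rpow_one]
    ring
  -- derivative of each outer term
  set D : ℝ := ∑ y, (q y * Real.log (q y) - ∑ x, p x * W x y * Real.log (W x y))
    with hD
  set F : ℝ → ℝ := fun ρ => ∑ y, (A y ρ) ^ (1 + ρ) with hF
  have hFd : HasDerivAt F D 0 := by
    apply HasDerivAt.fun_sum
    intro y _
    have := (hAd y).rpow ((hasDerivAt_id 0).const_add 1)
      (by rw [hA0]; exact hq_pos y)
    refine this.congr_deriv ?_
    rw [hA0]
    norm_num [Real.rpow_one]
    ring
  have hF0 : F 0 = 1 := by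
    have : F 0 = ∑ y, q y := by
      apply Finset.sum_congr rfl
      intro y _
      rw [hA0]
      norm_num
    rw [this, hq, Finset.sum_comm]
    simp only [← Finset.mul_sum, hWs, mul_one, hps]
  have hE0eq : E0 = fun ρ => -(Real.log (F ρ) / Real.log 2) := by
    funext ρ
    simp [E0, Real.logb, hF, hAdef]
  -- value of I
  have hI : I = (∑ x, ∑ y, p x * W x y * (Real.log (W x y) - Real.log (q y)))
      / Real.log 2 := by
    simp only [I, Real.logb]
    rw [Finset.sum_div]
    apply Finset.sum_congr rfl
    intro x _
    rw [Finset.sum_div]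
    apply Finset.sum_congr rfl
    intro y _
    rw [Real.log_div (ne_of_gt (hW x y)) (ne_of_gt (hq_pos y)), mul_div_assoc]
  have hDeq : (∑ x, ∑ y, p x * W x y * (Real.log (W x y) - Real.log (q y))) = -D := by
    rw [hD, ← Finset.sum_neg_distrib, Finset.sum_comm]
    apply Finset.sum_congr rfl
    intro y _
    rw [neg_sub]
    have hqs : q y * Real.log (q y) = ∑ x, p x * W x y * Real.log (q y) := by
      simp only [hq]
      rw [Finset.sum_mul]
    rw [hqs, ← Finset.sum_sub_distrib]
    exact Finset.sum_congr rfl fun x _ => mul_sub _ _ _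
  constructor
  · rw [hE0eq]
    show -(Real.log (F 0) / Real.log 2) = 0
    rw [hF0]
    simp
  · have hlog := (Real.hasDerivAt_log (by rw [hF0]; norm_num)).comp 0 hFd
    have hderiv := (hlog.div_const (Real.log 2)).neg
    rw [hE0eq]
    refine hderiv.congr_deriv ?_
    rw [hI, hDeq, hF0]
    simp [neg_div]
end
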